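/- Let V be a finite vertex set, let T = (V, E) be a tree on V, and let λ : V × V → ℝ be a symmetric weight function such that for every triple of distinct vertices a, u, b ∈ V with u an internal vertex of the unique path in T from a to b, one has λ(a, b) ≤ min(λ(a, u), λ(u, b)). Then for every tree T′ = (V, E′) on V, the sum of the weights λ over the edges of T is at least the sum of the weights λ over the edges of T′, i.e. Σ_{{u,v}∈E} λ(u, v) ≥ Σ_{{u′,v′}∈E′} λ(u′, v′). -/

import Mathlib

open SimpleGraph

/-- A walk avoiding an edge `e` gives reachability in the graph with `e` deleted. -/
private lemma reach_of_walk_avoid {V : Type*} {G : SimpleGraph V} {u v : V}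
    (p : G.Walk u v) {e : Sym2 V} (h : e ∉ p.edges) :
    (G \ SimpleGraph.fromEdgeSet {e}).Reachable u v := by
  refine ⟨p.transfer _ fun e' he' => ?_⟩
  simp only [edgeSet_sdiff, edgeSet_fromEdgeSet, edgeSet_sdiff_sdiff_isDiag, Set.mem_diff,
    Set.mem_singleton_iff]
  exact ⟨p.edges_subset_edgeSet he', fun h' => h (h' ▸ he')⟩

/-- For a trail `p : a → b` containing a dart `d`, the prefix before `d` and the suffix
after `d` avoid the edge of `d`. -/
private lemma trail_dart_reach {V : Type*} {G : SimpleGraph V} {a b : V}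
    (p : G.Walk a b) (ht : p.IsTrail) {d : G.Dart} (hd : d ∈ p.darts) :
    (G \ SimpleGraph.fromEdgeSet {d.edge}).Reachable a d.fst ∧
      (G \ SimpleGraph.fromEdgeSet {d.edge}).Reachable d.snd b := by
  induction p with
  | nil => simp at hd
  | @cons u c v h q ih =>
    rw [SimpleGraph.Walk.darts_cons, List.mem_cons] at hd
    rw [SimpleGraph.Walk.isTrail_cons] at ht
    rcases hd with rfl | hd
    · exact ⟨Reachable.refl u, reach_of_walk_avoid q ht.2⟩
    · have h1 := ih ht.1 hd
      have hne : s(u, c) ≠ d.edge := by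
        intro hh
        exact ht.2 (by rw [hh]; exact List.mem_map_of_mem hd)
      have hadj : (G \ SimpleGraph.fromEdgeSet {d.edge}).Adj u c := by
        simp only [sdiff_adj, fromEdgeSet_adj, Set.mem_singleton_iff]
        exact ⟨h, fun hc => hne hc.1⟩
      exact ⟨hadj.reachable.trans h1.1, h1.2⟩

private lemma reach_aux {V : Type*} {G H : SimpleGraph V} {x y : V}
    (hle : G \ SimpleGraph.fromEdgeSet {s(x, y)} ≤ H) (hxy : H.Reachable x y) :
    ∀ {u v : V}, G.Walk u v → H.Reachable u v := by
  intro u v p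
  induction p with
  | nil => exact Reachable.refl _
  | @cons u c v h q ih =>
    refine Reachable.trans ?_ ih
    by_cases he : s(u, c) = s(x, y)
    · rw [Sym2.eq_iff] at he
      rcases he with ⟨rfl, rfl⟩ | ⟨rfl, rfl⟩
      · exact hxy
      · exact hxy.symm
    · refine SimpleGraph.Adj.reachable (hle ?_)
      simp only [sdiff_adj, fromEdgeSet_adj, Set.mem_singleton_iff]
      exact ⟨h, fun hc => he hc.1⟩

/-- If `G` is connected, `H` contains `G` minus the edge `s(x,y)`, and `x` is reachable
from `y` in `H`, then `H` is connected. -/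
private lemma conn_of_le_del {V : Type*} {G H : SimpleGraph V} {x y : V}
    (hG : G.Connected) (hle : G \ SimpleGraph.fromEdgeSet {s(x, y)} ≤ H)
    (hxy : H.Reachable x y) : H.Connected := by
  rw [SimpleGraph.connected_iff] at hG ⊢
  refine ⟨fun u v => ?_, hG.2⟩
  obtain ⟨p⟩ := hG.1 u v
  exact reach_aux hle hxy p

/-- If `T` is a tree on a finite vertex set `V` and `w` is a symmetric weight function
such that `w a b ≤ min (w a u) (w u b)` whenever `u` is an internal vertex of the unique
path in `T` from `a` to `b`, then the edge-weight sum of `T` is at least that of any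
other tree `T'` on `V`. -/
theorem tree_max_weight_sum
    {V : Type*} [Fintype V] {T T' : SimpleGraph V}
    [Fintype T.edgeSet] [Fintype T'.edgeSet]
    (hT : T.IsTree) (hT' : T'.IsTree)
    (w : V → V → ℝ) (hsym : ∀ u v, w u v = w v u)
    (hpath : ∀ a u b : V, a ≠ u → u ≠ b → a ≠ b →
      ∀ p : T.Walk a b, p.IsPath → u ∈ p.support →
        w a b ≤ min (w a u) (w u b)) :
    ∑ e ∈ T'.edgeFinset, Sym2.lift ⟨w, hsym⟩ e ≤
      ∑ e ∈ T.edgeFinset, Sym2.lift ⟨w, hsym⟩ e := by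
  classical
  suffices H : ∀ (n : ℕ) (G : SimpleGraph V) (inst : Fintype G.edgeSet), G.IsTree →
      (T.edgeFinset \ @SimpleGraph.edgeFinset _ G inst).card = n →
      ∑ e ∈ @SimpleGraph.edgeFinset _ G inst, Sym2.lift ⟨w, hsym⟩ e ≤
        ∑ e ∈ T.edgeFinset, Sym2.lift ⟨w, hsym⟩ e by
    exact H _ T' _ hT' rfl
  intro n
  induction n using Nat.strong_induction_on with
  | _ n IH =>
  intro G instG hG hcard
  by_cases hempty : T.edgeFinset \ @SimpleGraph.edgeFinset _ G instG = ∅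
  · have hsub : T.edgeFinset ⊆ @SimpleGraph.edgeFinset _ G instG := by
      intro z hz
      by_contra hz'
      exact (Finset.eq_empty_iff_forall_notMem.mp hempty z) (Finset.mem_sdiff.mpr ⟨hz, hz'⟩)
    have h1 := hT.card_edgeFinset
    have h2 := @SimpleGraph.IsTree.card_edgeFinset _ G _ instG hG
    have : T.edgeFinset = @SimpleGraph.edgeFinset _ G instG :=
      Finset.eq_of_subset_of_card_le hsub (by omega)
    rw [← this]
  · obtain ⟨e0, he0⟩ := Finset.nonempty_of_ne_empty hempty
    induction e0 using Sym2.ind with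
    | _ a b =>
    rw [Finset.mem_sdiff] at he0
    have hab : T.Adj a b := SimpleGraph.mem_edgeFinset.mp he0.1
    have habG : s(a, b) ∉ G.edgeSet := fun hh => he0.2 (SimpleGraph.mem_edgeFinset.mpr hh)
    have hne : a ≠ b := hab.ne
    have hbr : ¬(T \ SimpleGraph.fromEdgeSet {s(a, b)}).Reachable a b :=
      ((SimpleGraph.isBridge_iff).mp
        (SimpleGraph.isAcyclic_iff_forall_adj_isBridge.mp hT.IsAcyclic hab))
    obtain ⟨p, hp, -⟩ := hG.existsUnique_path a b
    obtain ⟨d, hd, hxS, hyS⟩ := p.exists_boundary_dart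
      {v | (T \ SimpleGraph.fromEdgeSet {s(a, b)}).Reachable a v} (Reachable.refl a) hbr
    obtain ⟨⟨x, y⟩, hxyadj⟩ := d
    have hxS : (T \ SimpleGraph.fromEdgeSet {s(a, b)}).Reachable a x := hxS
    have hyS : ¬(T \ SimpleGraph.fromEdgeSet {s(a, b)}).Reachable a y := hyS
    have hxyadj : G.Adj x y := hxyadj
    have hxny : x ≠ y := hxyadj.ne
    have hay : a ≠ y := fun h => hyS (h ▸ Reachable.refl a)
    -- any walk in T between a vertex reachable from a and one not must use s(a,b)
    have key : ∀ {u v : V}, (T \ SimpleGraph.fromEdgeSet {s(a, b)}).Reachable a u →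
        ¬(T \ SimpleGraph.fromEdgeSet {s(a, b)}).Reachable a v →
        ∀ q : T.Walk u v, s(a, b) ∈ q.edges := by
      intro u v hu hv q
      by_contra hqe
      exact hv (hu.trans (reach_of_walk_avoid q hqe))
    -- weight comparison : w x y ≤ w a b
    have hwle : w x y ≤ w a b := by
      have step1 : w x y ≤ w a y := by
        by_cases hxa : x = a
        · rw [hxa]
        · obtain ⟨q, hq, -⟩ := hT.existsUnique_path x y
          have hq_e : s(a, b) ∈ q.edges := key hxS hyS q
          have haq : a ∈ q.support := q.fst_mem_support_of_mem_edges hq_e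
          exact le_trans (hpath x a y hxa hay hxny q hq haq)
            (min_le_right _ _)
      have step2 : w a y ≤ w a b := by
        by_cases hyb : y = b
        · rw [hyb]
        · obtain ⟨q2, hq2, -⟩ := hT.existsUnique_path a y
          have hq2_e : s(a, b) ∈ q2.edges := key (Reachable.refl a) hyS q2
          have hbq2 : b ∈ q2.support := q2.snd_mem_support_of_mem_edges hq2_e
          exact le_trans (hpath a b y hne (fun h => hyb h.symm) hay q2 hq2 hbq2)
            (min_le_left _ _)
      exact step1.trans step2
    -- prefix/suffix reachabilities in G minus the edge s(x,y)
    have hpre := trail_dart_reach p hp.isTrail hd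
    have hpre1 : (G \ SimpleGraph.fromEdgeSet {s(x, y)}).Reachable a x := hpre.1
    have hpre2 : (G \ SimpleGraph.fromEdgeSet {s(x, y)}).Reachable y b := hpre.2
    -- the new tree
    set Gnew : SimpleGraph V :=
      (G \ SimpleGraph.fromEdgeSet {s(x, y)}) ⊔ SimpleGraph.fromEdgeSet {s(a, b)} with hGnewdef
    haveI instH : Fintype Gnew.edgeSet := Fintype.ofFinite _
    have hle : G \ SimpleGraph.fromEdgeSet {s(x, y)} ≤ Gnew := le_sup_left
    have habnew : Gnew.Adj a b := by
      rw [hGnewdef, sup_adj, fromEdgeSet_adj]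
      exact Or.inr ⟨Set.mem_singleton _, hne⟩
    have hreach_xy : Gnew.Reachable x y :=
      (((hpre1.mono hle).symm.trans habnew.reachable)).trans (hpre2.mono hle).symm
    have hconn : Gnew.Connected := conn_of_le_del hG.isConnected hle hreach_xy
    -- the deleted edge was a bridge of G
    have hbrG : ¬(G \ SimpleGraph.fromEdgeSet {s(x, y)}).Reachable x y :=
      ((SimpleGraph.isBridge_iff).mp
        (SimpleGraph.isAcyclic_iff_forall_adj_isBridge.mp hG.IsAcyclic hxyadj))
    have hnotreach : ¬(G \ SimpleGraph.fromEdgeSet {s(x, y)}).Reachable a b := by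
      intro hr
      exact hbrG ((hpre1.symm.trans hr).trans hpre2.symm)
    have hbridge : Gnew.IsBridge s(a, b) := by
      rw [SimpleGraph.isBridge_iff]
      refine fun hr => hnotreach (hr.mono ?_)
      intro u v huv
      change (Gnew \ SimpleGraph.fromEdgeSet {s(a, b)}).Adj u v at huv
      rw [sdiff_adj] at huv
      obtain ⟨h1, h2⟩ := huv
      rw [hGnewdef, sup_adj] at h1
      rcases h1 with h1 | h1
      · exact h1
      · exact absurd h1 h2
    have hGset : Gnew.edgeSet = (G.edgeSet \ {s(x, y)}) ∪ {s(a, b)} := by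
      rw [hGnewdef, edgeSet_sup, edgeSet_sdiff, edgeSet_fromEdgeSet, edgeSet_fromEdgeSet,
        edgeSet_sdiff_sdiff_isDiag]
      congr 1
      ext z
      simp only [Set.mem_diff, Set.mem_singleton_iff, Set.mem_setOf_eq]
      constructor
      · rintro ⟨h, -⟩
        exact h
      · rintro rfl
        exact ⟨rfl, by simpa using hne⟩
    have hacyclic : Gnew.IsAcyclic := by
      intro v c hc
      by_cases hce : s(a, b) ∈ c.edges
      · exact hbridge.notMem_edges_of_isCycle hc hce
      · have hsubE : ∀ z ∈ c.edges, z ∈ G.edgeSet := by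
          intro z hz
          have hz' := c.edges_subset_edgeSet hz
          rw [hGset, Set.mem_union, Set.mem_diff, Set.mem_singleton_iff] at hz'
          rcases hz' with ⟨hzG, -⟩ | hzab
          · exact hzG
          · exact absurd (hzab ▸ hz) hce
        exact hG.IsAcyclic (c.transfer G hsubE) (hc.transfer hsubE)
    -- edge finset of the new tree
    have hGedge : @SimpleGraph.edgeFinset _ Gnew instH =
        insert s(a, b) ((@SimpleGraph.edgeFinset _ G instG).erase s(x, y)) := by
      ext z
      rw [SimpleGraph.mem_edgeFinset, Finset.mem_insert, Finset.mem_erase,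
        SimpleGraph.mem_edgeFinset, hGset, Set.mem_union, Set.mem_diff, Set.mem_singleton_iff]
      tauto
    have hfG : s(x, y) ∈ @SimpleGraph.edgeFinset _ G instG :=
      SimpleGraph.mem_edgeFinset.mpr ((SimpleGraph.mem_edgeSet G).mpr hxyadj)
    have heG' : s(a, b) ∉ (@SimpleGraph.edgeFinset _ G instG).erase s(x, y) := fun hc =>
      he0.2 (Finset.mem_of_mem_erase hc)
    have hsum : ∑ z ∈ @SimpleGraph.edgeFinset _ Gnew instH, Sym2.lift ⟨w, hsym⟩ z
        = ∑ z ∈ @SimpleGraph.edgeFinset _ G instG, Sym2.lift ⟨w, hsym⟩ z - w x y + w a b := by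
      rw [hGedge, Finset.sum_insert heG', Finset.sum_erase_eq_sub hfG]
      simp only [Sym2.lift_mk]
      ring
    -- the measure decreases
    have hsd : T.edgeFinset \ @SimpleGraph.edgeFinset _ Gnew instH =
        (T.edgeFinset \ @SimpleGraph.edgeFinset _ G instG).erase s(a, b) := by
      ext z
      rw [Finset.mem_sdiff, hGedge, Finset.mem_erase, Finset.mem_sdiff, Finset.mem_insert,
        Finset.mem_erase]
      constructor
      · rintro ⟨hzT, hz⟩
        push_neg at hz
        refine ⟨hz.1, hzT, fun hzG => ?_⟩
        have hzf : z = s(x, y) := by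
          by_contra hzf
          exact (hz.2 hzf) hzG
        have : s(x, y) ∈ T.edgeSet := hzf ▸ SimpleGraph.mem_edgeFinset.mp hzT
        -- but s(x,y) ∉ T : otherwise y would be reachable from a in T minus s(a,b)
        have hTxy : T.Adj x y := (SimpleGraph.mem_edgeSet T).mp this
        by_cases hfe : s(x, y) = s(a, b)
        · rw [Sym2.eq_iff] at hfe
          rcases hfe with ⟨rfl, rfl⟩ | ⟨rfl, rfl⟩
          · exact habG ((SimpleGraph.mem_edgeSet G).mpr hxyadj)
          · exact hbr hxS
        · have hadj : (T \ SimpleGraph.fromEdgeSet {s(a, b)}).Adj x y := by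
            simp only [sdiff_adj, fromEdgeSet_adj, Set.mem_singleton_iff]
            exact ⟨hTxy, fun hc => hfe hc.1⟩
          exact hyS (hxS.trans hadj.reachable)
      · rintro ⟨hznab, hzT, hzG⟩
        refine ⟨hzT, ?_⟩
        push_neg
        refine ⟨hznab, fun _ => hzG⟩
    have hmem : s(a, b) ∈ T.edgeFinset \ @SimpleGraph.edgeFinset _ G instG :=
      Finset.mem_sdiff.mpr ⟨he0.1, he0.2⟩
    have hpos : 0 < n := hcard ▸ Finset.card_pos.mpr ⟨_, hmem⟩
    have hlt : (T.edgeFinset \ @SimpleGraph.edgeFinset _ Gnew instH).card < n := by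
      rw [hsd, Finset.card_erase_of_mem hmem, hcard]
      omega
    have hIH := IH _ hlt Gnew instH ⟨hconn, hacyclic⟩ rfl
    rw [hsum] at hIH
    linarith
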